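/- In the mixed polyform model on S = ⋀ℂ^{n+s}, the antilinear operators R := Γ₁ ∘ … ∘ Γ_n ∘ Γ_{2n+1} ∘ … ∘ Γ_{2n+2s} ∘ ∗ and R' := Γ_{n+1} ∘ … ∘ Γ_{2n} ∘ ∗ satisfy R² = (−1)^{n(n−1)/2} · id_S and (R')² = (−1)^{n(n+1)/2} · id_S; in particular the signs depend only on n and not on s. -/

import Mathlib

/-- The space of mixed polyforms: the exterior algebra of `ℂ^(n+s)`. -/
noncomputable abbrev MPolyform (n s : ℕ) := ExteriorAlgebra ℂ (Fin (n + s) → ℂ)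

/-- The creation operator `c_k`: wedging with the basis one-form `e_k`. -/
noncomputable def creaM (n s : ℕ) (k : Fin (n + s)) : Module.End ℂ (MPolyform n s) :=
  LinearMap.mulLeft ℂ (ExteriorAlgebra.ι ℂ (Pi.single k 1))

/-- The annihilation operator `c_k†`: interior product (left contraction) with the
`k`-th dual basis vector. -/
noncomputable def anniM (n s : ℕ) (k : Fin (n + s)) : Module.End ℂ (MPolyform n s) :=
  CliffordAlgebra.contractLeft (Q := (0 : QuadraticForm ℂ (Fin (n + s) → ℂ)))
    (LinearMap.proj k)

/-- The gamma operators of the mixed model (0-indexed): `Γ_i = a_i + a_i†`,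
`Γ_{i+n} = I•(a_i − a_i†)` for `i < n` (with `a_i = c_i`), and `Γ_{I+2n} = b_I + b_I†`,
`Γ_{I+2n+s} = b_I − b_I†` for `I < s` (with `b_I = c_{n+I}`). -/
noncomputable def GamM (n s : ℕ) (A : Fin (2 * n + 2 * s)) : Module.End ℂ (MPolyform n s) :=
  if h1 : (A : ℕ) < n then
    creaM n s ⟨A, by omega⟩ + anniM n s ⟨A, by omega⟩
  else if h2 : (A : ℕ) < 2 * n then
    Complex.I • (creaM n s ⟨(A : ℕ) - n, by omega⟩ - anniM n s ⟨(A : ℕ) - n, by omega⟩)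
  else if h3 : (A : ℕ) < 2 * n + s then
    creaM n s ⟨(A : ℕ) - n, by omega⟩ + anniM n s ⟨(A : ℕ) - n, by omega⟩
  else
    creaM n s ⟨(A : ℕ) - n - s, by have := A.isLt; omega⟩
      - anniM n s ⟨(A : ℕ) - n - s, by have := A.isLt; omega⟩

/-- The basis polyform `e_{i₁} ∧ ⋯ ∧ e_{i_k}` indexed by a list of indices. -/
noncomputable def basisMonomialM (n s : ℕ) (l : List (Fin (n + s))) : MPolyform n s :=
  (l.map fun k => ExteriorAlgebra.ι ℂ (Pi.single k (1 : ℂ))).prod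

/-- `st` is the complex conjugation `∗` on mixed polyforms: the `ℂ`-antilinear involution
fixing each basis polyform and conjugating the complex coefficients. -/
def IsConjugationM (n s : ℕ) (st : MPolyform n s → MPolyform n s) : Prop :=
  (∀ x y, st (x + y) = st x + st y) ∧
  (∀ (z : ℂ) (x : MPolyform n s), st (z • x) = (starRingEnd ℂ) z • st x) ∧
  (∀ l : List (Fin (n + s)), st (basisMonomialM n s l) = basisMonomialM n s l)

/-- The antilinear operator `R := Γ₁ ⋯ Γ_n Γ_{2n+1} ⋯ Γ_{2n+2s} ∘ ∗`. -/
noncomputable def RopM (n s : ℕ) (st : MPolyform n s → MPolyform n s) :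
    MPolyform n s → MPolyform n s :=
  fun ψ =>
    ((((List.finRange n).map fun i => GamM n s ⟨i.1, by have := i.2; omega⟩) ++
      ((List.finRange (2 * s)).map fun j =>
        GamM n s ⟨2 * n + j.1, by have := j.2; omega⟩)).prod) (st ψ)

/-- The antilinear operator `R' := Γ_{n+1} ⋯ Γ_{2n} ∘ ∗`. -/
noncomputable def RopM' (n s : ℕ) (st : MPolyform n s → MPolyform n s) :
    MPolyform n s → MPolyform n s :=
  fun ψ =>
    (((List.finRange n).map fun i => GamM n s ⟨n + i.1, by have := i.2; omega⟩).prod) (st ψ)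

variable {n s : ℕ}

lemma car_cc (j k : Fin (n + s)) :
    creaM n s j * creaM n s k = -(creaM n s k * creaM n s j) := by
  refine LinearMap.ext fun x => ?_
  simp only [creaM, Module.End.mul_apply, LinearMap.mulLeft_apply, LinearMap.neg_apply]
  rw [← mul_assoc, ← mul_assoc, ← neg_mul]
  congr 1
  exact eq_neg_of_add_eq_zero_left (ExteriorAlgebra.ι_add_mul_swap _ _)

lemma car_aa (j k : Fin (n + s)) :
    anniM n s j * anniM n s k = -(anniM n s k * anniM n s j) := by
  refine LinearMap.ext fun x => ?_
  simpa only [anniM, Module.End.mul_apply, LinearMap.neg_apply] using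
    CliffordAlgebra.contractLeft_comm _ _ x

lemma car_ac (j k : Fin (n + s)) :
    anniM n s j * creaM n s k =
      (if j = k then (1:ℂ) else 0) • 1 - creaM n s k * anniM n s j := by
  refine LinearMap.ext fun x => ?_
  have h := CliffordAlgebra.contractLeft_ι_mul (Q := (0 : QuadraticForm ℂ (Fin (n + s) → ℂ)))
    (d := LinearMap.proj j) (Pi.single k (1:ℂ)) x
  simp only [anniM, creaM, Module.End.mul_apply, LinearMap.mulLeft_apply, LinearMap.sub_apply,
    LinearMap.smul_apply, Module.End.one_apply]
  rw [show ExteriorAlgebra.ι ℂ (Pi.single k (1:ℂ)) =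
    CliffordAlgebra.ι (0 : QuadraticForm ℂ (Fin (n + s) → ℂ)) (Pi.single k 1) from rfl, h]
  congr 1
  simp [LinearMap.proj_apply, Pi.single_apply]

/-- `G ε k = c_k + ε c_k†`. -/
noncomputable def GopM (n s : ℕ) (ε : ℂ) (k : Fin (n + s)) : Module.End ℂ (MPolyform n s) :=
  creaM n s k + ε • anniM n s k

lemma GopM_rel (ε η : ℂ) (j k : Fin (n + s)) :
    GopM n s ε j * GopM n s η k + GopM n s η k * GopM n s ε j =
      ((ε + η) * (if j = k then (1:ℂ) else 0)) • 1 := by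
  simp only [GopM, mul_add, add_mul, smul_mul_assoc, mul_smul_comm, smul_smul]
  rw [car_cc j k, car_aa j k, car_ac j k, car_ac k j, if_congr (eq_comm (a := k) (b := j)) rfl rfl]
  module

lemma GopM_sq (ε : ℂ) (k : Fin (n + s)) : GopM n s ε k * GopM n s ε k = ε • 1 := by
  have h := GopM_rel (n := n) (s := s) ε ε k k
  rw [if_pos rfl, mul_one] at h
  have h2 : (2:ℂ) • (GopM n s ε k * GopM n s ε k) = (2:ℂ) • ((ε • 1 : Module.End ℂ (MPolyform n s))) := by
    rw [two_smul, two_smul, h]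
    module
  exact smul_right_injective _ two_ne_zero h2

lemma GopM_anticomm {ε η : ℂ} {j k : Fin (n + s)} (h : j ≠ k ∨ ε + η = 0) :
    GopM n s ε j * GopM n s η k + GopM n s η k * GopM n s ε j = 0 := by
  rw [GopM_rel]
  rcases h with h | h
  · rw [if_neg h, mul_zero, zero_smul]
  · rw [h, zero_mul, zero_smul]

lemma GamM_eq1 {A : Fin (2*n+2*s)} (h : (A:ℕ) < n) :
    GamM n s A = GopM n s 1 ⟨A, by omega⟩ := by
  rw [GamM, dif_pos h, GopM, one_smul]

lemma GamM_eq2 {A : Fin (2*n+2*s)} (h1 : n ≤ (A:ℕ)) (h2 : (A:ℕ) < 2*n) :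
    GamM n s A = Complex.I • GopM n s (-1) ⟨(A:ℕ) - n, by omega⟩ := by
  rw [GamM, dif_neg (by omega), dif_pos h2]
  congr 1
  rw [GopM]
  module

lemma GamM_eq3 {A : Fin (2*n+2*s)} (h1 : 2*n ≤ (A:ℕ)) (h2 : (A:ℕ) < 2*n+s) :
    GamM n s A = GopM n s 1 ⟨(A:ℕ) - n, by omega⟩ := by
  rw [GamM, dif_neg (by omega), dif_neg (by omega), dif_pos h2, GopM, one_smul]

lemma GamM_eq4 {A : Fin (2*n+2*s)} (h1 : 2*n+s ≤ (A:ℕ)) :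
    GamM n s A = GopM n s (-1) ⟨(A:ℕ) - n - s, by have := A.isLt; omega⟩ := by
  rw [GamM, dif_neg (by omega), dif_neg (by omega), dif_neg (by omega), GopM]
  module

lemma smul_anticomm (σ τ : ℂ) (f g : Module.End ℂ (MPolyform n s)) (h : f*g + g*f = 0) :
    (σ•f)*(τ•g) + (τ•g)*(σ•f) = 0 := by
  rw [smul_mul_assoc, mul_smul_comm, smul_mul_assoc, mul_smul_comm, smul_smul, smul_smul,
    mul_comm τ σ, ← smul_add, h, smul_zero]

/-- The scalar prefactor of `Γ_A`. -/
noncomputable def sigM (n s : ℕ) (A : Fin (2*n+2*s)) : ℂ :=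
  if n ≤ (A:ℕ) ∧ (A:ℕ) < 2*n then Complex.I else 1

/-- The sign `ε_A` of `Γ_A`. -/
def epsM (n s : ℕ) (A : Fin (2*n+2*s)) : ℂ :=
  if (A:ℕ) < n then 1 else if (A:ℕ) < 2*n then -1 else if (A:ℕ) < 2*n+s then 1 else -1

/-- The fermionic mode index of `Γ_A`. -/
def kOfM (n s : ℕ) (A : Fin (2*n+2*s)) : Fin (n+s) :=
  ⟨if (A:ℕ) < n then A else if (A:ℕ) < 2*n+s then A - n else A - n - s,
    by have := A.isLt; split_ifs <;> omega⟩

lemma kOfM_val (A : Fin (2*n+2*s)) :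
    (kOfM n s A).1 = if (A:ℕ) < n then (A:ℕ) else if (A:ℕ) < 2*n+s then (A:ℕ) - n else (A:ℕ) - n - s := rfl

lemma sigM_eq1 {A : Fin (2*n+2*s)} (h : ¬(n ≤ (A:ℕ) ∧ (A:ℕ) < 2*n)) : sigM n s A = 1 := by
  unfold sigM; split_ifs <;> first | rfl | (exfalso; omega)

lemma GamM_eq_sig (A : Fin (2*n+2*s)) :
    GamM n s A = sigM n s A • GopM n s (epsM n s A) (kOfM n s A) := by
  have hA := A.isLt
  rcases Nat.lt_or_ge (A:ℕ) n with h1 | h1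
  · have hk : kOfM n s A = (⟨(A:ℕ), by omega⟩ : Fin (n+s)) := by
      apply Fin.ext; show (kOfM n s A).1 = (A:ℕ); rw [kOfM_val]; split_ifs <;> omega
    have he : epsM n s A = 1 := by unfold epsM; split_ifs <;> first | rfl | (exfalso; omega)
    rw [GamM_eq1 h1, sigM_eq1 (by omega), he, hk, one_smul]
  rcases Nat.lt_or_ge (A:ℕ) (2*n) with h2 | h2
  · have hk : kOfM n s A = (⟨(A:ℕ) - n, by omega⟩ : Fin (n+s)) := by
      apply Fin.ext; show (kOfM n s A).1 = (A:ℕ) - n; rw [kOfM_val]; split_ifs <;> omega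
    have hs : sigM n s A = Complex.I := by
      unfold sigM; split_ifs <;> first | rfl | (exfalso; omega)
    have he : epsM n s A = -1 := by unfold epsM; split_ifs <;> first | rfl | (exfalso; omega)
    rw [GamM_eq2 h1 h2, hs, he, hk]
  rcases Nat.lt_or_ge (A:ℕ) (2*n+s) with h3 | h3
  · have hk : kOfM n s A = (⟨(A:ℕ) - n, by omega⟩ : Fin (n+s)) := by
      apply Fin.ext; show (kOfM n s A).1 = (A:ℕ) - n; rw [kOfM_val]; split_ifs <;> omega
    have he : epsM n s A = 1 := by unfold epsM; split_ifs <;> first | rfl | (exfalso; omega)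
    rw [GamM_eq3 h2 h3, sigM_eq1 (by omega), he, hk, one_smul]
  · have hk : kOfM n s A = (⟨(A:ℕ) - n - s, by omega⟩ : Fin (n+s)) := by
      apply Fin.ext; show (kOfM n s A).1 = (A:ℕ) - n - s; rw [kOfM_val]; split_ifs <;> omega
    have he : epsM n s A = -1 := by unfold epsM; split_ifs <;> first | rfl | (exfalso; omega)
    rw [GamM_eq4 h3, sigM_eq1 (by omega), he, hk, one_smul]

lemma key_lemma {A B : Fin (2*n+2*s)} (hAB : A ≠ B) :
    kOfM n s A ≠ kOfM n s B ∨ epsM n s A + epsM n s B = 0 := by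
  have hA := A.isLt; have hB := B.isLt
  have hv : (A:ℕ) ≠ (B:ℕ) := fun h => hAB (Fin.ext h)
  suffices h : (kOfM n s A).1 ≠ (kOfM n s B).1 ∨ epsM n s A + epsM n s B = 0 by
    rcases h with h | h
    · exact Or.inl fun hc => h (congrArg Fin.val hc)
    · exact Or.inr h
  rw [kOfM_val, kOfM_val]
  unfold epsM
  split_ifs <;> first | (left; omega) | (right; norm_num)

lemma GamM_anticomm {A B : Fin (2*n+2*s)} (hAB : A ≠ B) :
    GamM n s A * GamM n s B + GamM n s B * GamM n s A = 0 := by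
  rw [GamM_eq_sig A, GamM_eq_sig B]
  exact smul_anticomm _ _ _ _ (GopM_anticomm (key_lemma hAB))

lemma GamM_sq (A : Fin (2*n+2*s)) :
    GamM n s A * GamM n s A = (if 2*n+s ≤ (A:ℕ) then (-1:ℂ) else 1) • 1 := by
  have hA := A.isLt
  rcases Nat.lt_or_ge (A:ℕ) n with h1 | h1
  · rw [GamM_eq1 h1, GopM_sq, if_neg (by omega)]
  rcases Nat.lt_or_ge (A:ℕ) (2*n) with h2 | h2
  · rw [GamM_eq2 h1 h2, smul_mul_assoc, mul_smul_comm, smul_smul, GopM_sq, smul_smul,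
      Complex.I_mul_I, if_neg (by omega)]
    norm_num
  rcases Nat.lt_or_ge (A:ℕ) (2*n+s) with h3 | h3
  · rw [GamM_eq3 h2 h3, GopM_sq, if_neg (by omega)]
  · rw [GamM_eq4 h3, GopM_sq, if_pos h3]

section ListLemmas
variable {E : Type*} [Ring E] [Algebra ℂ E]

lemma prod_mul_of_anticomm (x : E) (L : List E) (h : ∀ g ∈ L, x * g + g * x = 0) :
    L.prod * x = ((-1:ℂ) ^ L.length) • (x * L.prod) := by
  induction L with
  | nil => simp
  | cons a t ih =>
    have ha : a * x = -(x * a) := eq_neg_of_add_eq_zero_right (h a (List.mem_cons_self))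
    have ht := ih fun g hg => h g (List.mem_cons_of_mem _ hg)
    calc (a * t.prod) * x = a * (t.prod * x) := by rw [mul_assoc]
    _ = a * (((-1:ℂ) ^ t.length) • (x * t.prod)) := by rw [ht]
    _ = ((-1:ℂ) ^ t.length) • ((a * x) * t.prod) := by rw [mul_smul_comm, mul_assoc]
    _ = ((-1:ℂ) ^ (t.length + 1)) • (x * (a * t.prod)) := by
        rw [ha, neg_mul, smul_neg, pow_succ, mul_smul, neg_one_smul, smul_neg, mul_assoc]
    _ = ((-1:ℂ) ^ (a :: t).length) • (x * (a :: t).prod) := by rw [List.length_cons, List.prod_cons]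

lemma prod_sq_of_anticomm {ι : Type*} (l : List ι) (F : ι → E) (c : ι → ℂ)
    (hp : l.Pairwise fun i j => F i * F j + F j * F i = 0)
    (hsq : ∀ i ∈ l, F i * F i = c i • 1) :
    (l.map F).prod * (l.map F).prod =
      (((-1:ℂ) ^ (l.length.choose 2)) * (l.map c).prod) • 1 := by
  induction l with
  | nil => simp
  | cons i t ih =>
    rcases List.pairwise_cons.mp hp with ⟨hi, hpt⟩
    have hP := ih hpt (fun j hj => hsq j (List.mem_cons_of_mem _ hj))
    have hmove : (t.map F).prod * F i =
        ((-1:ℂ) ^ t.length) • (F i * (t.map F).prod) := by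
      have := prod_mul_of_anticomm (F i) (t.map F) ?_
      · simpa using this
      · intro g hg
        rcases List.mem_map.mp hg with ⟨j, hj, rfl⟩
        exact hi j hj
    set P := (t.map F).prod with hPdef
    calc (F i * P) * (F i * P) = F i * ((P * F i) * P) := by rw [mul_assoc, mul_assoc]
    _ = F i * ((((-1:ℂ) ^ t.length) • (F i * P)) * P) := by rw [hmove]
    _ = ((-1:ℂ) ^ t.length) • ((F i * F i) * (P * P)) := by
        rw [smul_mul_assoc, mul_smul_comm, mul_assoc, mul_assoc]
    _ = ((-1:ℂ) ^ t.length) • ((c i • (1:E)) * ((((-1:ℂ) ^ (t.length.choose 2)) * (t.map c).prod) • 1)) := by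
        rw [hsq i (List.mem_cons_self), hP]
    _ = (((-1:ℂ) ^ ((i :: t).length.choose 2)) * ((i :: t).map c).prod) • 1 := by
        rw [smul_mul_smul_comm, mul_one, smul_smul, List.map_cons, List.prod_cons,
          List.length_cons]
        congr 1
        have hch : (t.length + 1).choose 2 = t.length + t.length.choose 2 := by
          rw [Nat.choose_succ_succ, Nat.choose_one_right]
        rw [hch, pow_add]
        ring

end ListLemmas

section St
variable {n s : ℕ}

lemma basisMonomialM_nil : basisMonomialM n s [] = 1 := rfl

lemma basisMonomialM_cons (k : Fin (n+s)) (l : List (Fin (n+s))) :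
    basisMonomialM n s (k :: l) =
      ExteriorAlgebra.ι ℂ (Pi.single k (1:ℂ)) * basisMonomialM n s l := by
  rw [basisMonomialM, List.map_cons, List.prod_cons, basisMonomialM]

lemma basisMonomialM_append (l₁ l₂ : List (Fin (n+s))) :
    basisMonomialM n s (l₁ ++ l₂) = basisMonomialM n s l₁ * basisMonomialM n s l₂ := by
  rw [basisMonomialM, List.map_append, List.prod_append, basisMonomialM, basisMonomialM]

lemma span_monomials :
    Submodule.span ℂ (Set.range (basisMonomialM n s)) = ⊤ := by
  rw [eq_top_iff]
  rintro x -
  induction x using ExteriorAlgebra.induction with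
  | algebraMap r =>
      rw [Algebra.algebraMap_eq_smul_one]
      exact Submodule.smul_mem _ _ (Submodule.subset_span ⟨[], rfl⟩)
  | ι v =>
      have hv : v = ∑ k : Fin (n+s), v k • (Pi.single k (1:ℂ) : Fin (n+s) → ℂ) := by
        funext j
        simp [Pi.single_apply, Finset.sum_apply, mul_comm]
      rw [hv, map_sum]
      refine Submodule.sum_mem _ fun k _ => ?_
      rw [map_smul]
      refine Submodule.smul_mem _ _ (Submodule.subset_span ⟨[k], ?_⟩)
      rw [basisMonomialM_cons, basisMonomialM_nil, mul_one]
  | mul a b ha hb =>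
      induction ha using Submodule.span_induction with
      | mem a' ha' =>
          rcases ha' with ⟨l₁, rfl⟩
          induction hb using Submodule.span_induction with
          | mem b' hb' =>
              rcases hb' with ⟨l₂, rfl⟩
              exact Submodule.subset_span ⟨l₁ ++ l₂, basisMonomialM_append l₁ l₂⟩
          | zero => rw [mul_zero]; exact Submodule.zero_mem _
          | add x y _ _ hx hy => rw [mul_add]; exact Submodule.add_mem _ hx hy
          | smul z x _ hx => rw [mul_smul_comm]; exact Submodule.smul_mem _ _ hx
      | zero => rw [zero_mul]; exact Submodule.zero_mem _
      | add x y _ _ hx hy => rw [add_mul]; exact Submodule.add_mem _ hx hy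
      | smul z x _ hx => rw [smul_mul_assoc]; exact Submodule.smul_mem _ _ hx
  | add a b ha hb => exact Submodule.add_mem _ ha hb

end St

section StLemmas
variable {n s : ℕ} {st : MPolyform n s → MPolyform n s} (hst : IsConjugationM n s st)
include hst

lemma st_zero : st 0 = 0 := by
  have h := hst.1 0 0
  rw [add_zero] at h
  exact left_eq_add.mp h

lemma st_sub (x y : MPolyform n s) : st (x - y) = st x - st y := by
  have hneg : st (-y) = -st y := by
    have := hst.2.1 (-1) y
    simpa using this
  rw [sub_eq_add_neg, hst.1, hneg, sub_eq_add_neg]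

/-- `st` commutes with every creation operator. -/
lemma st_crea (k : Fin (n+s)) (x : MPolyform n s) :
    st (creaM n s k x) = creaM n s k (st x) := by
  have hx : x ∈ Submodule.span ℂ (Set.range (basisMonomialM n s)) := by
    rw [span_monomials]; trivial
  induction hx using Submodule.span_induction with
  | mem y hy =>
      rcases hy with ⟨l, rfl⟩
      have hc : creaM n s k (basisMonomialM n s l) = basisMonomialM n s (k :: l) := by
        rw [basisMonomialM_cons, creaM, LinearMap.mulLeft_apply]
      rw [hc, hst.2.2, hst.2.2, hc]
  | zero => rw [map_zero, st_zero hst, map_zero]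
  | add y z _ _ hy hz => rw [map_add, hst.1, hst.1, hy, hz, map_add]
  | smul z y _ hy => rw [map_smul, hst.2.1, hst.2.1, hy, map_smul]

/-- `st` fixes annihilation operators applied to monomials. -/
lemma st_anni_mono (k : Fin (n+s)) (l : List (Fin (n+s))) :
    st (anniM n s k (basisMonomialM n s l)) = anniM n s k (basisMonomialM n s l) := by
  induction l with
  | nil =>
      have h : anniM n s k (basisMonomialM n s []) = 0 := by
        rw [basisMonomialM_nil, anniM]
        exact CliffordAlgebra.contractLeft_one _ _
      rw [h, st_zero hst]
  | cons j t ih =>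
      have h : anniM n s k (basisMonomialM n s (j :: t)) =
          (if k = j then (1:ℂ) else 0) • basisMonomialM n s t
            - creaM n s j (anniM n s k (basisMonomialM n s t)) := by
        rw [basisMonomialM_cons, anniM, creaM, LinearMap.mulLeft_apply]
        rw [show ExteriorAlgebra.ι ℂ (Pi.single j (1:ℂ)) =
          CliffordAlgebra.ι (0 : QuadraticForm ℂ (Fin (n + s) → ℂ)) (Pi.single j 1) from rfl,
          CliffordAlgebra.contractLeft_ι_mul]
        congr 2
        simp [LinearMap.proj_apply, Pi.single_apply]
      rw [h, st_sub hst, hst.2.1, st_crea hst, ih, hst.2.2]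
      congr 2
      split_ifs <;> simp

end StLemmas

section StLemmas2
variable {n s : ℕ} {st : MPolyform n s → MPolyform n s} (hst : IsConjugationM n s st)
include hst

/-- `st` commutes with every annihilation operator. -/
lemma st_anni (k : Fin (n+s)) (x : MPolyform n s) :
    st (anniM n s k x) = anniM n s k (st x) := by
  have hx : x ∈ Submodule.span ℂ (Set.range (basisMonomialM n s)) := by
    rw [span_monomials]; trivial
  induction hx using Submodule.span_induction with
  | mem y hy =>
      rcases hy with ⟨l, rfl⟩
      rw [st_anni_mono hst, hst.2.2]
  | zero => rw [map_zero, st_zero hst, map_zero]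
  | add y z _ _ hy hz => rw [map_add, hst.1, hst.1, hy, hz, map_add]
  | smul z y _ hy => rw [map_smul, hst.2.1, hst.2.1, hy, map_smul]

lemma st_st (x : MPolyform n s) : st (st x) = x := by
  have hx : x ∈ Submodule.span ℂ (Set.range (basisMonomialM n s)) := by
    rw [span_monomials]; trivial
  induction hx using Submodule.span_induction with
  | mem y hy => rcases hy with ⟨l, rfl⟩; rw [hst.2.2, hst.2.2]
  | zero => rw [st_zero hst, st_zero hst]
  | add y z _ _ hy hz => rw [hst.1, hst.1, hy, hz]
  | smul z y _ hy => rw [hst.2.1, hst.2.1, hy, Complex.conj_conj]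

/-- `st` commutes with the "real" gamma operators. -/
lemma st_GamM_real {A : Fin (2*n+2*s)} (h : (A:ℕ) < n ∨ 2*n ≤ (A:ℕ))
    (x : MPolyform n s) : st (GamM n s A x) = GamM n s A (st x) := by
  have hA := A.isLt
  have hG : ∀ (ε : ℂ), ε = 1 ∨ ε = -1 → ∀ (k : Fin (n+s)) (y : MPolyform n s),
      st (GopM n s ε k y) = GopM n s ε k (st y) := by
    rintro ε hε k y
    rw [GopM, LinearMap.add_apply, LinearMap.add_apply, hst.1, st_crea hst,
      LinearMap.smul_apply, LinearMap.smul_apply, hst.2.1, st_anni hst]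
    rcases hε with rfl | rfl <;> simp
  rcases h with h1 | h1
  · rw [GamM_eq1 h1]
    exact hG 1 (Or.inl rfl) _ x
  rcases Nat.lt_or_ge (A:ℕ) (2*n+s) with h3 | h3
  · rw [GamM_eq3 h1 h3]
    exact hG 1 (Or.inl rfl) _ x
  · rw [GamM_eq4 h3]
    exact hG (-1) (Or.inr rfl) _ x

/-- `st` anti-commutes with the "imaginary" gamma operators. -/
lemma st_GamM_imag {A : Fin (2*n+2*s)} (h1 : n ≤ (A:ℕ)) (h2 : (A:ℕ) < 2*n)
    (x : MPolyform n s) : st (GamM n s A x) = -(GamM n s A (st x)) := by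
  rw [GamM_eq2 h1 h2]
  rw [LinearMap.smul_apply, hst.2.1, LinearMap.smul_apply]
  rw [show (starRingEnd ℂ) Complex.I = -Complex.I from Complex.conj_I, neg_smul, ← smul_neg]
  rw [← smul_neg]
  congr 1
  rw [GopM, LinearMap.add_apply, LinearMap.add_apply, hst.1, st_crea hst,
    LinearMap.smul_apply, LinearMap.smul_apply, hst.2.1, st_anni hst]
  simp

lemma st_list_prod_real (L : List (Module.End ℂ (MPolyform n s)))
    (h : ∀ f ∈ L, ∀ x, st (f x) = f (st x)) (x : MPolyform n s) :
    st (L.prod x) = L.prod (st x) := by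
  induction L with
  | nil => simp
  | cons a t ih =>
      rw [List.prod_cons, Module.End.mul_apply, h a (List.mem_cons_self),
        ih (fun f hf => h f (List.mem_cons_of_mem _ hf)), Module.End.mul_apply]

lemma st_list_prod_imag (L : List (Module.End ℂ (MPolyform n s)))
    (h : ∀ f ∈ L, ∀ x, st (f x) = -(f (st x))) (x : MPolyform n s) :
    st (L.prod x) = ((-1:ℂ) ^ L.length) • L.prod (st x) := by
  induction L with
  | nil => simp
  | cons a t ih =>
      rw [List.prod_cons, Module.End.mul_apply, h a (List.mem_cons_self),
        ih (fun f hf => h f (List.mem_cons_of_mem _ hf)), map_smul, Module.End.mul_apply,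
        List.length_cons, pow_succ]
      rw [mul_comm, mul_smul, neg_one_smul]

end StLemmas2

section Signs

lemma sign_R_aux (n : ℕ) : ∀ s : ℕ, ((-1:ℂ))^((n+2*s).choose 2) * (-1)^s = (-1)^(n.choose 2)
  | 0 => by simp
  | (t+1) => by
      have ih := sign_R_aux n t
      set m := n + 2*t with hm
      have hc : (n+2*(t+1)).choose 2 = m.choose 2 + (2*m+1) := by
        have h1 : n+2*(t+1) = m + 1 + 1 := by omega
        rw [h1, Nat.choose_succ_succ (m+1) 1, Nat.choose_succ_succ m 1,
          Nat.choose_one_right, Nat.choose_one_right]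
        simp only [show Nat.succ 1 = 2 from rfl]
        omega
      calc ((-1:ℂ))^((n+2*(t+1)).choose 2) * (-1)^(t+1)
          = ((-1:ℂ)^(m.choose 2) * (-1)^t) * ((-1)^(2*m) * ((-1)*(-1))) := by
            rw [hc, pow_add, pow_add, pow_succ, pow_succ]; ring
        _ = (-1:ℂ)^(n.choose 2) := by rw [ih, pow_mul]; norm_num

end Signs

section Final
variable {n s : ℕ}

/-- The index list of `R`. -/
def lRM (n s : ℕ) : List (Fin (2*n+2*s)) :=
  ((List.finRange n).map fun i => (⟨i.1, by have := i.2; omega⟩ : Fin (2*n+2*s))) ++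
    ((List.finRange (2*s)).map fun j => (⟨2*n + j.1, by have := j.2; omega⟩ : Fin (2*n+2*s)))

/-- The index list of `R'`. -/
def lRM' (n s : ℕ) : List (Fin (2*n+2*s)) :=
  (List.finRange n).map fun i => (⟨n + i.1, by have := i.2; omega⟩ : Fin (2*n+2*s))

lemma lRM_nodup : (lRM n s).Nodup := by
  refine List.Nodup.append ?_ ?_ ?_
  · refine (List.nodup_finRange n).map (fun i j h => ?_)
    simp only [Fin.mk.injEq] at h
    exact Fin.ext h
  · refine (List.nodup_finRange (2*s)).map (fun i j h => ?_)
    simp only [Fin.mk.injEq] at h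
    exact Fin.ext (by omega)
  · intro a ha hb
    rcases List.mem_map.mp ha with ⟨i, _, rfl⟩
    rcases List.mem_map.mp hb with ⟨j, _, hj⟩
    simp only [Fin.mk.injEq] at hj
    have hi := i.2
    omega

lemma lRM'_nodup : (lRM' n s).Nodup := by
  refine (List.nodup_finRange n).map (fun i j h => ?_)
  simp only [Fin.mk.injEq] at h
  exact Fin.ext (by omega)

lemma lRM_mem {A : Fin (2*n+2*s)} (hA : A ∈ lRM n s) : (A:ℕ) < n ∨ 2*n ≤ (A:ℕ) := by
  rcases List.mem_append.mp hA with h | h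
  · rcases List.mem_map.mp h with ⟨i, _, rfl⟩
    exact Or.inl i.2
  · rcases List.mem_map.mp h with ⟨j, _, rfl⟩
    exact Or.inr (Nat.le_add_right _ _)

lemma lRM'_mem {A : Fin (2*n+2*s)} (hA : A ∈ lRM' n s) : n ≤ (A:ℕ) ∧ (A:ℕ) < 2*n := by
  rcases List.mem_map.mp hA with ⟨i, _, rfl⟩
  exact ⟨Nat.le_add_right _ _, by have := i.2; show n + i.1 < 2*n; omega⟩

lemma prod_sq_lR (l : List (Fin (2*n+2*s))) (hl : l.Nodup) :
    (l.map (GamM n s)).prod * (l.map (GamM n s)).prod =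
      (((-1:ℂ) ^ (l.length.choose 2)) *
        (l.map (fun A : Fin (2*n+2*s) => if 2*n+s ≤ (A:ℕ) then (-1:ℂ) else 1)).prod) • 1 := by
  refine prod_sq_of_anticomm l (GamM n s) _ ?_ (fun A _ => GamM_sq A)
  exact hl.imp (fun hAB => GamM_anticomm hAB)

lemma lRM_length : (lRM n s).length = n + 2*s := by
  simp [lRM]

lemma lRM'_length : (lRM' n s).length = n := by
  simp [lRM']

lemma lRM_cprod :
    ((lRM n s).map (fun A : Fin (2*n+2*s) => if 2*n+s ≤ (A:ℕ) then (-1:ℂ) else 1)).prod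
      = (-1)^s := by
  rw [lRM, List.map_append, List.prod_append, List.map_map, List.map_map]
  have h1 : ((List.finRange n).map ((fun A : Fin (2*n+2*s) =>
      if 2*n+s ≤ (A:ℕ) then (-1:ℂ) else 1) ∘ fun i => ⟨i.1, by have := i.2; omega⟩)).prod = 1 := by
    refine List.prod_eq_one fun x hx => ?_
    rcases List.mem_map.mp hx with ⟨i, _, rfl⟩
    have := i.2
    simp only [Function.comp_apply]
    rw [if_neg (by omega)]
  rw [h1, one_mul]
  have h2 : ((List.finRange (2*s)).map ((fun A : Fin (2*n+2*s) =>
      if 2*n+s ≤ (A:ℕ) then (-1:ℂ) else 1) ∘ fun j => ⟨2*n + j.1, by have := j.2; omega⟩))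
      = (List.finRange (2*s)).map (fun j : Fin (2*s) => if s ≤ (j:ℕ) then (-1:ℂ) else 1) := by
    refine List.map_congr_left fun j _ => ?_
    simp only [Function.comp_apply]
    congr 1
    simp only [eq_iff_iff]
    omega
  rw [h2, ← Fin.prod_univ_def]
  have h3 : ∀ j : Fin (2*s), (if s ≤ (j:ℕ) then (-1:ℂ) else 1) =
      (fun m : ℕ => if s ≤ m then (-1:ℂ) else 1) (j:ℕ) := fun j => rfl
  rw [Finset.prod_congr rfl fun j _ => h3 j,
    Fin.prod_univ_eq_prod_range (fun m : ℕ => if s ≤ m then (-1:ℂ) else 1) (2*s), two_mul,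
    Finset.prod_range_add]
  have h4 : ∏ i ∈ Finset.range s, (if s ≤ i then (-1:ℂ) else 1) = 1 :=
    Finset.prod_eq_one fun i hi => if_neg (by have := Finset.mem_range.mp hi; omega)
  have h5 : ∏ i ∈ Finset.range s, (if s ≤ s + i then (-1:ℂ) else 1) = (-1)^s := by
    rw [Finset.prod_congr rfl fun i _ => if_pos (Nat.le_add_right s i)]
    rw [Finset.prod_const, Finset.card_range]
  rw [h4, h5, one_mul]

lemma lRM'_cprod :
    ((lRM' n s).map (fun A : Fin (2*n+2*s) => if 2*n+s ≤ (A:ℕ) then (-1:ℂ) else 1)).prod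
      = 1 := by
  refine List.prod_eq_one fun x hx => ?_
  rcases List.mem_map.mp hx with ⟨A, hA, rfl⟩
  have h := lRM'_mem hA
  rw [if_neg (by omega)]

end Final

/-- `R² = (−1)^{n(n−1)/2} id` and `(R')² = (−1)^{n(n+1)/2} id`; in particular the signs
depend only on `n` and not on `s`. -/
theorem RopM_RopM'_sq (n s : ℕ) (hns : 1 ≤ n + s)
    (st : MPolyform n s → MPolyform n s) (hst : IsConjugationM n s st) (ψ : MPolyform n s) :
    RopM n s st (RopM n s st ψ) = ((-1 : ℂ) ^ (n * (n - 1) / 2)) • ψ ∧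
    RopM' n s st (RopM' n s st ψ) = ((-1 : ℂ) ^ (n * (n + 1) / 2)) • ψ := by
  constructor
  · have hlist : (((List.finRange n).map fun i => GamM n s ⟨i.1, by have := i.2; omega⟩) ++
        ((List.finRange (2 * s)).map fun j =>
          GamM n s ⟨2 * n + j.1, by have := j.2; omega⟩))
        = (lRM n s).map (GamM n s) := by
      rw [lRM, List.map_append, List.map_map, List.map_map]
      rfl
    have hreal : ∀ f ∈ (lRM n s).map (GamM n s), ∀ x : MPolyform n s,
        st (f x) = f (st x) := by
      intro f hf x
      rcases List.mem_map.mp hf with ⟨A, hA, rfl⟩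
      exact st_GamM_real hst (lRM_mem hA) x
    simp only [RopM]
    rw [hlist, st_list_prod_real hst _ hreal, st_st hst, ← Module.End.mul_apply,
      prod_sq_lR _ lRM_nodup, lRM_length, lRM_cprod, LinearMap.smul_apply,
      Module.End.one_apply, sign_R_aux n s, Nat.choose_two_right]
  · have hlist : ((List.finRange n).map fun i =>
        GamM n s ⟨n + i.1, by have := i.2; omega⟩) = (lRM' n s).map (GamM n s) := by
      rw [lRM', List.map_map]
      rfl
    have himag : ∀ f ∈ (lRM' n s).map (GamM n s), ∀ x : MPolyform n s,
        st (f x) = -(f (st x)) := by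
      intro f hf x
      rcases List.mem_map.mp hf with ⟨A, hA, rfl⟩
      exact st_GamM_imag hst (lRM'_mem hA).1 (lRM'_mem hA).2 x
    simp only [RopM']
    rw [hlist, st_list_prod_imag hst _ himag, st_st hst, map_smul, ← Module.End.mul_apply,
      prod_sq_lR _ lRM'_nodup, List.length_map, lRM'_length, lRM'_cprod, mul_one,
      LinearMap.smul_apply, Module.End.one_apply, smul_smul, ← pow_add]
    congr 2
    have h1 : (n+1).choose 2 = n + n.choose 2 := by
      rw [Nat.choose_succ_succ n 1, Nat.choose_one_right]
    have h2 : (n+1).choose 2 = n*(n+1)/2 := by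
      rw [Nat.choose_two_right, Nat.add_sub_cancel, Nat.mul_comm]
    omega
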